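/- Let φ : ℝ → ℝ be a measurable odd function with 0 ≤ φ(x) ≤ 1 for x > 0, φ(x) = 1 for 0 < x ≤ 1, and φ(x) = 0 for x ≥ 2. Let (x_k), (y_k) be real sequences with x_k ≠ 0, y_k > 0, y_k → 0, |x_{k+1}| ≤ |x_k|/2, y_{k+1} ≤ y_k, |x_k| ≥ 6·√(y_k), such that the intervals [x_k − 2√(y_k), x_k + 2√(y_k)] are pairwise disjoint and Σ_k y_k/x_k² < ∞. Define ψ(x) = Σ_k φ((x − x_k)/√(y_k)). Then |ψ(x)| ≤ 1 for all x ∈ ℝ, ψ is integrable with compact support, and liminf_{n→∞} |G_ψ(x_n + i·y_n)| / log(1/y_n) ≥ 1/π, where G_ψ(z) = (1/(πi))∫_ℝ ψ(t)/(z − t) dt for z ∈ ℍ. -/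

import Mathlib

open MeasureTheory Real Complex Filter
open scoped Topology ENNReal NNReal

noncomputable section

/-- `G_ψ(z) = (1/(πi)) ∫_ℝ ψ(t)/(z - t) dt`, the analytic extension `ψ + iHψ`
of an integrable `ψ : ℝ → ℝ` to the upper half-plane. -/
noncomputable def UHG (ψ : ℝ → ℝ) (z : ℂ) : ℂ :=
  ((Real.pi : ℂ) * Complex.I)⁻¹ • ∫ t : ℝ, ((ψ t : ℂ) / (z - (t : ℂ)))

/-- The hypotheses on the bump function `φ`: measurable, odd, `0 ≤ φ ≤ 1` on `(0,∞)`,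
`φ = 1` on `(0,1]` and `φ = 0` on `[2,∞)`. -/
def IsPhi (φ : ℝ → ℝ) : Prop :=
  Measurable φ ∧ (∀ x : ℝ, φ (-x) = - φ x) ∧ (∀ x : ℝ, 0 < x → 0 ≤ φ x ∧ φ x ≤ 1) ∧
    (∀ x : ℝ, 0 < x → x ≤ 1 → φ x = 1) ∧ (∀ x : ℝ, 2 ≤ x → φ x = 0)

namespace Stmt14Aux

lemma isphi_abs_le {φ : ℝ → ℝ} (hφ : IsPhi φ) (u : ℝ) : |φ u| ≤ 1 := by
  obtain ⟨-, hodd, hb, -, -⟩ := hφ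
  rcases lt_trichotomy u 0 with h | h | h
  · have h1 := hb (-u) (by linarith)
    have h2 : φ u = - φ (-u) := by have := hodd u; linarith
    rw [abs_le]; constructor <;> nlinarith [h1.1, h1.2]
  · have h0 : φ 0 = 0 := by have := hodd 0; simp at this; linarith
    simp [h, h0]
  · have h1 := hb u h
    rw [abs_le]; constructor <;> linarith [h1.1, h1.2]

lemma isphi_zero {φ : ℝ → ℝ} (hφ : IsPhi φ) {u : ℝ} (hu : 2 ≤ |u|) : φ u = 0 := by
  obtain ⟨-, hodd, -, -, h2⟩ := hφ
  rcases le_or_gt 2 u with h | h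
  · exact h2 u h
  · have hu' : 2 ≤ -u := by rcases abs_cases u with ⟨h1, _⟩ | ⟨h1, _⟩ <;> linarith
    have ho := hodd (-u)
    rw [neg_neg] at ho
    rw [ho, h2 (-u) hu', neg_zero]

lemma integrable_of_bounded_support {E : Type*} [NormedAddCommGroup E]
    (f : ℝ → E) (hm : AEStronglyMeasurable f volume) (M a b : ℝ)
    (hM : ∀ s, ‖f s‖ ≤ M) (hs : Function.support f ⊆ Set.Icc a b) :
    Integrable f := by
  rw [← integrableOn_iff_integrable_of_support_subset hs]
  exact Measure.integrableOn_of_bounded (isCompact_Icc.measure_lt_top).ne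
    hm (ae_of_all _ hM)

lemma integral_eq_reflect (G : ℝ → ℂ) (hG : Integrable G) :
    ∫ u, G u = ∫ u in Set.Ioi (0:ℝ), (G u + G (-u)) := by
  have h2 : (∫ u in Set.Ioi (0:ℝ), G (-u)) = ∫ u in Set.Iic (0:ℝ), G u := by
    simpa using integral_comp_neg_Ioi (0:ℝ) G
  rw [integral_add hG.integrableOn (hG.comp_neg.integrableOn), h2,
    add_comm, intervalIntegral.integral_Iic_add_Ioi hG.integrableOn hG.integrableOn]

end Stmt14Aux

namespace Stmt14Aux

lemma bump_support {φ : ℝ → ℝ} (hφ : IsPhi φ) {r : ℝ} (hr : 0 < r) {u : ℝ}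
    (hu : 2 * r ≤ |u|) : φ (u / r) = 0 := by
  apply isphi_zero hφ
  rw [abs_div, abs_of_pos hr, le_div_iff₀ hr]
  linarith

lemma bump_integrable {φ : ℝ → ℝ} (hφ : IsPhi φ) {r : ℝ} (hr : 0 < r) {w : ℂ}
    (hw : w.im ≠ 0) :
    Integrable (fun u : ℝ => (φ (u / r) : ℂ) / (w - u)) := by
  have hne : ∀ u : ℝ, w - (u:ℂ) ≠ 0 := by
    intro u h
    apply hw
    have : (w - (u:ℂ)).im = 0 := by rw [h]; simp
    simpa using this
  apply integrable_of_bounded_support _ ?_ (1 / |w.im|) (-(2*r)) (2*r)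
  · intro s
    rw [norm_div]
    have h1 : ‖(φ (s / r) : ℂ)‖ ≤ 1 := by
      rw [Complex.norm_real]; exact isphi_abs_le hφ _
    have h2 : |w.im| ≤ ‖w - (s:ℂ)‖ := by
      have : (w - (s:ℂ)).im = w.im := by simp
      calc |w.im| = |(w - (s:ℂ)).im| := by rw [this]
        _ ≤ ‖w - (s:ℂ)‖ := Complex.abs_im_le_norm _
        _ = ‖w - (s:ℂ)‖ := rfl
    have him : 0 < |w.im| := abs_pos.mpr hw
    rw [div_le_div_iff₀ (lt_of_lt_of_le him h2) him] at *
    calc ‖(φ (s / r) : ℂ)‖ * |w.im| ≤ 1 * |w.im| := by nlinarith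
      _ ≤ 1 * ‖w - (s:ℂ)‖ := by nlinarith
  · intro s hs
    simp only [Function.mem_support] at hs
    by_contra hmem
    have : 2 * r ≤ |s| := by
      rw [Set.mem_Icc] at hmem
      push_neg at hmem
      rcases le_or_gt (-(2*r)) s with h | h
      · have := hmem h
        rw [abs_of_pos (by linarith : 0 < s)]; linarith
      · rw [abs_of_neg (by linarith : s < 0)]; linarith
    exact hs (by rw [bump_support hφ hr this]; simp)
  · -- measurability
    have hK : Continuous (fun u : ℝ => (w - (u:ℂ))⁻¹) :=
      (continuous_const.sub Complex.continuous_ofReal).inv₀ hne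
    have : (fun u : ℝ => (φ (u / r) : ℂ) / (w - u)) =
        fun u : ℝ => (φ (u / r) : ℂ) * (fun u : ℝ => (w - (u:ℂ))⁻¹) u := by
      funext u; rw [div_eq_mul_inv]
    rw [this]
    exact ((Complex.measurable_ofReal.comp (hφ.1.comp (measurable_id.div_const r))).mul
      hK.measurable).aestronglyMeasurable

lemma bump_reflect {φ : ℝ → ℝ} (hφ : IsPhi φ) {r : ℝ} (hr : 0 < r) {w : ℂ}
    (hw : w.im ≠ 0) :
    ∫ u : ℝ, (φ (u / r) : ℂ) / (w - u)
      = ∫ u in Set.Ioi (0:ℝ), (φ (u / r) : ℂ) * (2 * u / ((w - u) * (w + u))) := by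
  rw [integral_eq_reflect _ (bump_integrable hφ hr hw)]
  apply setIntegral_congr_fun measurableSet_Ioi
  intro u _
  have hne : ∀ v : ℝ, w - (v:ℂ) ≠ 0 := by
    intro v h
    apply hw
    have : (w - (v:ℂ)).im = 0 := by rw [h]; simp
    simpa using this
  have h1 : w - ((-u : ℝ):ℂ) = w + u := by push_cast; ring
  have h2 : (φ (-u / r) : ℂ) = - (φ (u / r) : ℂ) := by
    have : -u / r = -(u / r) := by ring
    rw [this, hφ.2.1]; push_cast; ring
  have hwu : w - (u:ℂ) ≠ 0 := hne u
  have hwu' : w + (u:ℂ) ≠ 0 := by rw [← h1]; exact hne (-u)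
  simp only []
  rw [h1, h2]
  field_simp
  ring

end Stmt14Aux

namespace Stmt14Aux

lemma bump_bound {φ : ℝ → ℝ} (hφ : IsPhi φ) {r : ℝ} (hr : 0 < r) {w : ℂ}
    (hw : w.im ≠ 0) {d : ℝ} (hd : 0 < d)
    (hdist : ∀ u : ℝ, |u| ≤ 2 * r → d ≤ |w.re - u|) :
    ‖∫ u : ℝ, (φ (u / r) : ℂ) / (w - u)‖ ≤ 4 * r ^ 2 / d ^ 2 := by
  rw [bump_reflect hφ hr hw]
  set F : ℝ → ℂ := fun u => (φ (u / r) : ℂ) * (2 * u / ((w - u) * (w + u))) with hF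
  have hA : ∀ u : ℝ, |u| ≤ 2 * r → d ≤ ‖w - (u:ℂ)‖ ∧ d ≤ ‖w + (u:ℂ)‖ := by
    intro u hu
    constructor
    · calc d ≤ |w.re - u| := hdist u hu
        _ = |(w - (u:ℂ)).re| := by simp
        _ ≤ ‖w - (u:ℂ)‖ := Complex.abs_re_le_norm _
    · have h1 : w + (u:ℂ) = w - ((-u:ℝ):ℂ) := by push_cast; ring
      calc d ≤ |w.re - (-u)| := hdist (-u) (by rwa [abs_neg])
        _ = |(w - ((-u:ℝ):ℂ)).re| := by simp
        _ ≤ ‖w - ((-u:ℝ):ℂ)‖ := Complex.abs_re_le_norm _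
        _ = ‖w + (u:ℂ)‖ := by rw [h1]
  have hFbound : ∀ u : ℝ, |u| ≤ 2 * r → ‖F u‖ ≤ 2 * |u| / d ^ 2 := by
    intro u hu
    obtain ⟨hd1, hd2⟩ := hA u hu
    have hApos : (0:ℝ) < ‖w - (u:ℂ)‖ := lt_of_lt_of_le hd hd1
    have hBpos : (0:ℝ) < ‖w + (u:ℂ)‖ := lt_of_lt_of_le hd hd2
    have step1 : ‖F u‖ ≤ 2 * |u| / (‖w - (u:ℂ)‖ * ‖w + (u:ℂ)‖) := by
      rw [hF]
      simp only [norm_mul, norm_div]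
      have e2 : ‖(2:ℂ)‖ = 2 := by norm_num
      have eu : ‖(u:ℂ)‖ = |u| := by rw [Complex.norm_real, Real.norm_eq_abs]
      rw [e2, eu, Complex.norm_real, Real.norm_eq_abs]
      have hφa : |φ (u / r)| ≤ 1 := isphi_abs_le hφ _
      have hnn : (0:ℝ) ≤ 2 * |u| / (‖w - ↑u‖ * ‖w + ↑u‖) := by positivity
      nlinarith [mul_nonneg (sub_nonneg.mpr hφa) hnn]
    refine step1.trans ?_
    apply div_le_div_of_nonneg_left (by positivity) (by positivity)
    nlinarith
  have hFzero : ∀ u : ℝ, 2 * r < |u| → F u = 0 := by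
    intro u hu
    rw [hF]
    simp [bump_support hφ hr hu.le]
  have hFint : Integrable F := by
    have hden : ∀ u : ℝ, (w - (u:ℂ)) * (w + (u:ℂ)) ≠ 0 := by
      intro u
      apply mul_ne_zero
      · intro h
        apply hw
        have : (w - (u:ℂ)).im = 0 := by rw [h]; simp
        simpa using this
      · intro h
        apply hw
        have : (w + (u:ℂ)).im = 0 := by rw [h]; simp
        simpa using this
    apply integrable_of_bounded_support F ?_ (2 * (2*r) / d ^ 2) (-(2*r)) (2*r)
    · intro s
      rcases le_or_gt |s| (2*r) with h | h
      · refine (hFbound s h).trans ?_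
        apply div_le_div_of_nonneg_right ?_ (by positivity)
        linarith
      · rw [hFzero s h]
        simp
        positivity
    · intro s hs
      rw [Set.mem_Icc]
      by_contra hmem
      push_neg at hmem
      apply hs
      apply hFzero
      rcases le_or_gt (-(2*r)) s with h | h
      · have := hmem h
        rw [abs_of_pos (by linarith : 0 < s)]; linarith
      · rw [abs_of_neg (by linarith : s < 0)]; linarith
    · have hK : Continuous (fun u : ℝ => 2 * (u:ℂ) / ((w - u) * (w + u))) := by
        apply Continuous.div
        · exact continuous_const.mul Complex.continuous_ofReal
        · exact ((continuous_const.sub Complex.continuous_ofReal).mul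
            (continuous_const.add Complex.continuous_ofReal))
        · exact hden
      exact ((Complex.measurable_ofReal.comp (hφ.1.comp (measurable_id.div_const r))).mul
        hK.measurable).aestronglyMeasurable
  calc ‖∫ u in Set.Ioi (0:ℝ), F u‖ ≤ ∫ u in Set.Ioi (0:ℝ), ‖F u‖ :=
        norm_integral_le_integral_norm _
    _ ≤ ∫ u in Set.Ioi (0:ℝ), Set.indicator (Set.Ioc 0 (2*r)) (fun u => 2 * u / d ^ 2) u := by
        apply setIntegral_mono_on hFint.norm.integrableOn ?_ measurableSet_Ioi
        · intro u hu
          rw [Set.mem_Ioi] at hu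
          by_cases hcase : u ≤ 2 * r
          · rw [Set.indicator_of_mem (by exact ⟨hu, hcase⟩)]
            have := hFbound u (by rw [abs_of_pos hu]; exact hcase)
            rwa [abs_of_pos hu] at this
          · rw [Set.indicator_of_notMem (by simp [Set.mem_Ioc]; intro _; linarith),
              hFzero u (by rw [abs_of_pos hu]; linarith)]
            simp
        · apply Integrable.integrableOn
          apply IntegrableOn.integrable_indicator ?_ measurableSet_Ioc
          exact Continuous.integrableOn_Ioc (by fun_prop)
    _ = ∫ u in Set.Ioc (0:ℝ) (2*r), 2 * u / d ^ 2 := by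
        rw [setIntegral_indicator measurableSet_Ioc]
        congr 1
        rw [Set.inter_eq_self_of_subset_right Set.Ioc_subset_Ioi_self]
    _ = 4 * r ^ 2 / d ^ 2 := by
        rw [← intervalIntegral.integral_of_le (by positivity : (0:ℝ) ≤ 2*r)]
        have he : ∀ u:ℝ, 2 * u / d ^ 2 = (2 / d ^ 2) * u := fun u => by ring
        simp_rw [he]
        rw [intervalIntegral.integral_const_mul, integral_id]
        field_simp
        ring

end Stmt14Aux

namespace Stmt14Aux

lemma bump_main {φ : ℝ → ℝ} (hφ : IsPhi φ) {Y : ℝ} (hY : 0 < Y) :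
    Real.log (1 / Y) ≤ ‖∫ u : ℝ, (φ (u / Real.sqrt Y) : ℂ) / ((Y:ℂ) * Complex.I - u)‖ := by
  set r := Real.sqrt Y with hrdef
  have hr : 0 < r := Real.sqrt_pos.mpr hY
  have hr2 : r ^ 2 = Y := Real.sq_sqrt hY.le
  have hw : ((Y:ℂ) * Complex.I).im ≠ 0 := by simp [hY.ne']
  rw [bump_reflect hφ hr hw]
  set g : ℝ → ℝ := fun u => 2 * u * φ (u / r) / (u ^ 2 + Y ^ 2) with hgdef
  have key : ∀ u ∈ Set.Ioi (0:ℝ),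
      (φ (u / r) : ℂ) * (2 * u / (((Y:ℂ) * Complex.I - u) * ((Y:ℂ) * Complex.I + u)))
        = ((-(g u) : ℝ) : ℂ) := by
    intro u _
    have hden : ((Y:ℂ) * Complex.I - u) * ((Y:ℂ) * Complex.I + u)
        = -((u:ℂ) ^ 2 + (Y:ℂ) ^ 2) := by
      linear_combination (Y:ℂ) ^ 2 * Complex.I_sq
    have hne : (u:ℂ) ^ 2 + (Y:ℂ) ^ 2 ≠ 0 := by
      have : ((u ^ 2 + Y ^ 2 : ℝ) : ℂ) ≠ 0 := by
        rw [Complex.ofReal_ne_zero]; positivity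
      push_cast at this
      convert this using 1
    rw [hden, div_neg, mul_neg, hgdef]
    push_cast
    rw [neg_inj]
    field_simp
  rw [setIntegral_congr_fun measurableSet_Ioi key]
  have hcast : (∫ x in Set.Ioi (0:ℝ), ((-g x : ℝ) : ℂ)) = ((∫ x in Set.Ioi (0:ℝ), -g x : ℝ) : ℂ) :=
    integral_ofReal
  rw [hcast, Complex.norm_real, Real.norm_eq_abs, integral_neg, abs_neg]
  have hgmeas : Measurable g := by
    apply Measurable.div
    · exact (measurable_const.mul measurable_id).mul (hφ.1.comp (measurable_id.div_const r))
    · fun_prop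
  have hgint : Integrable g := by
    apply integrable_of_bounded_support g hgmeas.aestronglyMeasurable (2 * (2 * r) / Y ^ 2)
      (-(2 * r)) (2 * r)
    · intro s
      rcases le_or_gt |s| (2 * r) with h | h
      · rw [Real.norm_eq_abs, hgdef]
        simp only []
        rw [abs_div, abs_mul]
        have h1 : |2 * s| ≤ 2 * (2 * r) := by
          rw [abs_mul, _root_.abs_two]; nlinarith [abs_nonneg s]
        have h2 : |φ (s / r)| ≤ 1 := isphi_abs_le hφ _
        have h3 : Y ^ 2 ≤ |s ^ 2 + Y ^ 2| := by
          rw [abs_of_pos (by positivity)]; nlinarith [sq_nonneg s]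
        have h4 : (0:ℝ) < Y ^ 2 := by positivity
        rw [div_le_div_iff₀ (by linarith) h4]
        nlinarith [abs_nonneg (2 * s), abs_nonneg (φ (s / r)),
          mul_le_mul h1 h2 (abs_nonneg (φ (s / r))) (by positivity : (0:ℝ) ≤ 2 * (2 * r))]
      · have : φ (s / r) = 0 := bump_support hφ hr h.le
        rw [hgdef]; simp only [this, mul_zero, zero_div, norm_zero]
        positivity
    · intro s hs
      rw [Set.mem_Icc]
      by_contra hmem
      push_neg at hmem
      apply hs
      have habs : 2 * r < |s| := by
        rcases le_or_gt (-(2 * r)) s with h | h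
        · have := hmem h
          rw [abs_of_pos (by linarith : 0 < s)]; linarith
        · rw [abs_of_neg (by linarith : s < 0)]; linarith
      rw [hgdef]; simp [bump_support hφ hr habs.le]
  have hgnn : ∀ u : ℝ, 0 < u → 0 ≤ g u := by
    intro u hu
    have := (hφ.2.2.1 (u / r) (by positivity)).1
    rw [hgdef]
    positivity
  have hintIoi : (0:ℝ) ≤ ∫ u in Set.Ioi (0:ℝ), g u := by
    apply setIntegral_nonneg measurableSet_Ioi
    intro u hu
    exact hgnn u hu
  rw [_root_.abs_of_nonneg hintIoi]
  have step1 : ∫ u in Set.Ioc (0:ℝ) r, g u ≤ ∫ u in Set.Ioi (0:ℝ), g u := by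
    apply setIntegral_mono_set hgint.integrableOn
    · rw [EventuallyLE, ae_restrict_iff' measurableSet_Ioi]
      exact ae_of_all _ fun u hu => hgnn u hu
    · exact (Set.Ioc_subset_Ioi_self).eventuallyLE
  have step2 : ∫ u in Set.Ioc (0:ℝ) r, g u = ∫ u in Set.Ioc (0:ℝ) r, 2 * u / (u ^ 2 + Y ^ 2) := by
    apply setIntegral_congr_fun measurableSet_Ioc
    intro u hu
    rw [Set.mem_Ioc] at hu
    have h1 : φ (u / r) = 1 := hφ.2.2.2.1 (u / r) (div_pos hu.1 hr) (by
      rw [div_le_one hr]; exact hu.2)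
    rw [hgdef]; simp only [h1, mul_one]
  have step3 : ∫ u in Set.Ioc (0:ℝ) r, 2 * u / (u ^ 2 + Y ^ 2)
      = Real.log (r ^ 2 + Y ^ 2) - Real.log (0 ^ 2 + Y ^ 2) := by
    rw [← intervalIntegral.integral_of_le hr.le]
    apply intervalIntegral.integral_eq_sub_of_hasDerivAt (f := fun u => Real.log (u ^ 2 + Y ^ 2))
    · intro u _
      have hpos : u ^ 2 + Y ^ 2 ≠ 0 := by positivity
      have h1 : HasDerivAt (fun v : ℝ => v ^ 2 + Y ^ 2) (2 * u) u := by
        simpa using (hasDerivAt_pow 2 u).add_const (Y ^ 2)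
      have h2 : HasDerivAt (fun v : ℝ => Real.log (v ^ 2 + Y ^ 2)) ((u ^ 2 + Y ^ 2)⁻¹ * (2 * u)) u := by
        convert h1.log hpos using 1; ring
      rw [div_eq_inv_mul]
      exact h2
    · apply Continuous.intervalIntegrable
      apply Continuous.div (by fun_prop) (by fun_prop)
      intro u; positivity
  have hfinal : Real.log (1 / Y) ≤ Real.log (r ^ 2 + Y ^ 2) - Real.log (0 ^ 2 + Y ^ 2) := by
    rw [hr2, one_div, Real.log_inv]
    have e1 : (0:ℝ) ^ 2 + Y ^ 2 = Y ^ 2 := by ring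
    rw [e1, Real.log_pow]
    have e2 : Real.log Y ≤ Real.log (Y + Y ^ 2) :=
      Real.log_le_log hY (by nlinarith)
    push_cast
    linarith
  linarith [step1, step2.symm.le, step3]
end Stmt14Aux


/-- **Second case of the construction.** With separated translates
`φ_k(s) = φ((s - x k)/√(y k))` of the bump `φ`, the sum `ψ = Σ_k φ_k` satisfies
`|ψ| ≤ 1`, is integrable with compact support, and
`liminf |G_ψ(x n + i y n)| / log(1/y n) ≥ 1/π`. -/
theorem stmt_14 (φ : ℝ → ℝ) (hφ : IsPhi φ) (x y : ℕ → ℝ)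
    (hx0 : ∀ k, x k ≠ 0) (hy : ∀ k, 0 < y k) (hy0 : Tendsto y atTop (𝓝 0))
    (hxhalf : ∀ k, |x (k + 1)| ≤ |x k| / 2) (hymono : ∀ k, y (k + 1) ≤ y k)
    (hsep : ∀ k, 6 * Real.sqrt (y k) ≤ |x k|)
    (hdisj : Pairwise fun k l => Disjoint
        (Set.Icc (x k - 2 * Real.sqrt (y k)) (x k + 2 * Real.sqrt (y k)))
        (Set.Icc (x l - 2 * Real.sqrt (y l)) (x l + 2 * Real.sqrt (y l))))
    (hsum : Summable fun k => y k / (x k) ^ 2) :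
    (∀ s : ℝ, |∑' k : ℕ, φ ((s - x k) / Real.sqrt (y k))| ≤ 1) ∧
    Integrable (fun s : ℝ => ∑' k : ℕ, φ ((s - x k) / Real.sqrt (y k))) ∧
    HasCompactSupport (fun s : ℝ => ∑' k : ℕ, φ ((s - x k) / Real.sqrt (y k))) ∧
    ∀ ε > (0:ℝ), ∀ᶠ n in atTop,
      1 / Real.pi - ε ≤
        ‖UHG (fun s : ℝ => ∑' k : ℕ, φ ((s - x k) / Real.sqrt (y k)))
            ((x n : ℂ) + (y n : ℂ) * Complex.I)‖ / Real.log (1 / y n) := by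
  classical
  set ψ : ℝ → ℝ := fun s : ℝ => ∑' k : ℕ, φ ((s - x k) / Real.sqrt (y k)) with hψdef
  set r : ℕ → ℝ := fun k => Real.sqrt (y k) with hrdef
  set f : ℕ → ℝ → ℝ := fun k s => φ ((s - x k) / r k) with hfdef
  have hψf : ∀ s, ψ s = ∑' k, f k s := fun s => rfl
  have hr : ∀ k, 0 < r k := fun k => Real.sqrt_pos.mpr (hy k)
  have hr2 : ∀ k, (r k) ^ 2 = y k := fun k => Real.sq_sqrt (hy k).le
  have hrx : ∀ k, 2 * r k ≤ |x k| / 3 := fun k => by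
    have := hsep k; simp only [hrdef]; linarith
  have hxpos : ∀ k, 0 < |x k| := fun k => abs_pos.mpr (hx0 k)
  have hxmono : ∀ k l, k ≤ l → |x l| ≤ |x k| := by
    intro k l hkl
    induction l, hkl using Nat.le_induction with
    | base => exact le_refl _
    | succ n hn ih => exact (hxhalf n).trans (by linarith [abs_nonneg (x n), ih])
  have hxhalf' : ∀ k l, k < l → |x l| ≤ |x k| / 2 := by
    intro k l hkl
    calc |x l| ≤ |x (k+1)| := hxmono _ _ hkl
      _ ≤ |x k| / 2 := hxhalf k
  have hxgeo : ∀ k, |x k| ≤ |x 0| * (1/2) ^ k := by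
    intro k
    induction k with
    | zero => simp
    | succ n ih =>
      calc |x (n+1)| ≤ |x n| / 2 := hxhalf n
        _ ≤ (|x 0| * (1/2) ^ n) / 2 := by linarith
        _ = |x 0| * (1/2) ^ (n+1) := by ring
  have hsupp : ∀ k s, f k s ≠ 0 → s ∈ Set.Icc (x k - 2 * r k) (x k + 2 * r k) := by
    intro k s hfs
    by_contra hmem
    apply hfs
    have habs : 2 * r k ≤ |s - x k| := by
      rw [Set.mem_Icc] at hmem; push_neg at hmem
      have hrk := hr k
      rcases le_or_gt (x k - 2 * r k) s with h | h
      · have := hmem h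
        rw [abs_of_pos (by linarith)]; linarith
      · rw [abs_of_neg (by linarith)]; linarith
    exact Stmt14Aux.bump_support hφ (hr k) habs
  have hone : ∀ s k l, k ≠ l → f k s ≠ 0 → f l s = 0 := by
    intro s k l hkl hfk
    by_contra hfl
    have h1 := hsupp k s hfk
    have h2 := hsupp l s hfl
    exact (Set.disjoint_left.mp (hdisj hkl)) h1 h2
  have hsummable : ∀ s, Summable (fun k => f k s) := by
    intro s
    by_cases hcase : ∀ k, f k s = 0
    · exact summable_of_ne_finset_zero (s := ∅) (fun b _ => hcase b)
    · push_neg at hcase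
      obtain ⟨k0, hk0⟩ := hcase
      apply summable_of_ne_finset_zero (s := {k0})
      intro b hb
      exact hone s k0 b (fun h => (Finset.notMem_singleton.mp hb) h.symm) hk0
  have htsum : ∀ s k0, f k0 s ≠ 0 → ψ s = f k0 s := by
    intro s k0 h
    rw [hψf s]
    exact tsum_eq_single k0 (fun b hb => hone s k0 b (Ne.symm hb) h)
  have htsum0 : ∀ s, (∀ k, f k s = 0) → ψ s = 0 := by
    intro s h
    rw [hψf s]
    rw [tsum_congr h, tsum_zero]
  have habs : ∀ s, |ψ s| ≤ 1 := by
    intro s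
    by_cases hcase : ∀ k, f k s = 0
    · rw [htsum0 s hcase]; norm_num
    · push_neg at hcase; obtain ⟨k0, hk0⟩ := hcase
      rw [htsum s k0 hk0]
      exact Stmt14Aux.isphi_abs_le hφ _
  have hψsupp : Function.support ψ ⊆ Set.Icc (-(2 * |x 0|)) (2 * |x 0|) := by
    intro s hs
    rw [Function.mem_support] at hs
    have hex : ∃ k, f k s ≠ 0 := by
      by_contra h; push_neg at h; exact hs (htsum0 s h)
    obtain ⟨k, hk⟩ := hex
    have h1 := hsupp k s hk
    rw [Set.mem_Icc] at h1 ⊢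
    have h2 := hrx k
    have h3 := hxmono 0 k (Nat.zero_le k)
    constructor <;>
      nlinarith [abs_nonneg (x 0), neg_abs_le (x k), le_abs_self (x k), hxpos k]
  have hfmeas : ∀ k, Measurable (f k) := fun k =>
    hφ.1.comp ((measurable_id.sub_const (x k)).div_const (r k))
  have hψmeas : Measurable ψ := by
    apply measurable_of_tendsto_metrizable (f := fun N s => ∑ k ∈ Finset.range N, f k s)
    · intro N; exact Finset.measurable_sum _ (fun k _ => hfmeas k)
    · rw [tendsto_pi_nhds]
      intro s
      rw [hψf s]  -- careful: goal about ψ?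
      exact (hsummable s).hasSum.tendsto_sum_nat
  have hψint : Integrable ψ :=
    Stmt14Aux.integrable_of_bounded_support ψ hψmeas.aestronglyMeasurable 1 _ _
      (fun s => by rw [Real.norm_eq_abs]; exact habs s) hψsupp
  have hψcs : HasCompactSupport ψ := by
    apply HasCompactSupport.intro (isCompact_Icc (a := -(2 * |x 0|)) (b := 2 * |x 0|))
    intro s hs
    by_contra h
    exact hs (hψsupp (Function.mem_support.mpr h))
  refine ⟨habs, hψint, hψcs, ?_⟩
  intro ε hε
  set S : ℝ := ∑' k, y k / (x k) ^ 2 with hSdef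
  have hS0 : 0 ≤ S := tsum_nonneg (fun k => div_nonneg (hy k).le (sq_nonneg _))
  have hLtop : Tendsto (fun n => Real.log (1 / y n)) atTop atTop := by
    have h1 : Tendsto y atTop (𝓝[>] 0) :=
      tendsto_nhdsWithin_of_tendsto_nhds_of_eventually_within y hy0
        (Eventually.of_forall hy)
    have h2 : Tendsto (fun n => (y n)⁻¹) atTop atTop := tendsto_inv_nhdsGT_zero.comp h1
    have h3 := Real.tendsto_log_atTop.comp h2
    simp only [Function.comp_def] at h3
    simp only [one_div]
    exact h3
  have hEv : ∀ᶠ n in atTop, 1 ≤ Real.log (1 / y n) ∧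
      144 * S ≤ Real.pi * ε * Real.log (1 / y n) := by
    have hpe : 0 < Real.pi * ε := mul_pos Real.pi_pos hε
    filter_upwards [hLtop.eventually_ge_atTop 1,
      hLtop.eventually_ge_atTop (144 * S / (Real.pi * ε))] with n h1 h2
    refine ⟨h1, ?_⟩
    rw [div_le_iff₀ hpe] at h2
    linarith
  filter_upwards [hEv] with n hn
  obtain ⟨hL1, hLS⟩ := hn
  set L : ℝ := Real.log (1 / y n) with hLdef
  have hLpos : 0 < L := lt_of_lt_of_le one_pos hL1
  set z : ℂ := (x n : ℂ) + (y n : ℂ) * Complex.I with hzdef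
  have hzim : ∀ c : ℝ, (z - (c : ℂ)).im = y n := by
    intro c; simp [hzdef]
  have hzne : ∀ t : ℝ, z - (t : ℂ) ≠ 0 := by
    intro t h
    have h1 := hzim t
    rw [h] at h1
    simp at h1
    exact (hy n).ne' h1.symm
  have hwim : ∀ k, (z - ((x k : ℝ) : ℂ)).im ≠ 0 := fun k => by
    rw [hzim]; exact (hy n).ne'
  set J : ℕ → ℂ := fun k => ∫ u : ℝ, (φ (u / r k) : ℂ) / ((z - ((x k : ℝ) : ℂ)) - u)
    with hJdef
  have htrans : ∀ k, (∫ t : ℝ, (f k t : ℂ) / (z - t)) = J k := by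
    intro k
    have hpt : ∀ t : ℝ, (f k t : ℂ) / (z - t)
        = (fun u : ℝ => (φ (u / r k) : ℂ) / ((z - ((x k : ℝ) : ℂ)) - u)) (t - x k) := by
      intro t
      simp only [hfdef]
      congr 1
      push_cast
      ring
    rw [hJdef]
    simp only []
    rw [← integral_sub_right_eq_self
      (fun u : ℝ => (φ (u / r k) : ℂ) / ((z - ((x k : ℝ) : ℂ)) - u)) (x k)]
    exact integral_congr_ae (ae_of_all _ hpt)
  have hKcont : Continuous (fun t : ℝ => (z - (t : ℂ))⁻¹) :=
    (continuous_const.sub Complex.continuous_ofReal).inv₀ hzne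
  have hgmeas : ∀ k, AEStronglyMeasurable (fun t : ℝ => (f k t : ℂ) / (z - t)) volume := by
    intro k
    have he : (fun t : ℝ => (f k t : ℂ) / (z - t))
        = fun t => (f k t : ℂ) * (fun t : ℝ => (z - (t : ℂ))⁻¹) t := by
      funext t; rw [div_eq_mul_inv]
    rw [he]
    exact ((Complex.measurable_ofReal.comp (hfmeas k)).mul
      hKcont.measurable).aestronglyMeasurable
  have hlin : ∀ k, (∫⁻ t : ℝ, (‖(f k t : ℂ) / (z - t)‖₊ : ℝ≥0∞))
      ≤ ENNReal.ofReal (1 / y n) * ENNReal.ofReal (4 * r k) := by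
    intro k
    have hb : ∀ t : ℝ, (‖(f k t : ℂ) / (z - t)‖₊ : ℝ≥0∞)
        ≤ Set.indicator (Set.Icc (x k - 2 * r k) (x k + 2 * r k))
          (fun _ => ENNReal.ofReal (1 / y n)) t := by
      intro t
      by_cases ht : t ∈ Set.Icc (x k - 2 * r k) (x k + 2 * r k)
      · rw [Set.indicator_of_mem ht]
        have h1 : ‖(f k t : ℂ) / (z - t)‖ ≤ 1 / y n := by
          rw [norm_div, Complex.norm_real, Real.norm_eq_abs]
          have h2 : |f k t| ≤ 1 := Stmt14Aux.isphi_abs_le hφ _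
          have h3 : y n ≤ ‖z - (t : ℂ)‖ := by
            calc y n = |(z - (t : ℂ)).im| := by rw [hzim]; rw [abs_of_pos (hy n)]
              _ ≤ ‖z - (t : ℂ)‖ := Complex.abs_im_le_norm _
          have h4 : (0:ℝ) < ‖z - (t : ℂ)‖ := lt_of_lt_of_le (hy n) h3
          rw [div_le_div_iff₀ h4 (hy n)]
          nlinarith [abs_nonneg (f k t)]
        calc (‖(f k t : ℂ) / (z - t)‖₊ : ℝ≥0∞)
            = ENNReal.ofReal ‖(f k t : ℂ) / (z - t)‖ := (ofReal_norm _).symm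
          _ ≤ ENNReal.ofReal (1 / y n) := ENNReal.ofReal_le_ofReal h1
      · rw [Set.indicator_of_notMem ht]
        have h0 : f k t = 0 := by by_contra h; exact ht (hsupp k t h)
        simp [h0]
    calc (∫⁻ t : ℝ, (‖(f k t : ℂ) / (z - t)‖₊ : ℝ≥0∞))
        ≤ ∫⁻ t, Set.indicator (Set.Icc (x k - 2 * r k) (x k + 2 * r k))
            (fun _ => ENNReal.ofReal (1 / y n)) t := lintegral_mono hb
      _ = ENNReal.ofReal (1 / y n) * volume (Set.Icc (x k - 2 * r k) (x k + 2 * r k)) :=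
          lintegral_indicator_const measurableSet_Icc _
      _ = ENNReal.ofReal (1 / y n) * ENNReal.ofReal (4 * r k) := by
          rw [Real.volume_Icc]
          congr 1
          ring
  have hsumr : Summable (fun k => 4 * r k) := by
    apply Summable.of_nonneg_of_le (fun k => by positivity) (fun k => ?_)
      ((summable_geometric_of_lt_one (by norm_num : (0:ℝ) ≤ 1/2)
        (by norm_num)).mul_left (4 * (|x 0| / 6)))
    have h1 : 6 * r k ≤ |x k| := hsep k
    have h2 := hxgeo k
    have h3 : (0:ℝ) < (1/2) ^ k := by positivity
    nlinarith
  have htsumlin : (∑' k, ∫⁻ t : ℝ, (‖(f k t : ℂ) / (z - t)‖₊ : ℝ≥0∞)) ≠ ⊤ := by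
    apply ne_top_of_le_ne_top ?_ (ENNReal.tsum_le_tsum hlin)
    rw [ENNReal.tsum_mul_left]
    apply ENNReal.mul_ne_top ENNReal.ofReal_ne_top
    rw [← ENNReal.ofReal_tsum_of_nonneg (fun k => by positivity) hsumr]
    exact ENNReal.ofReal_ne_top
  have hsplit : (∫ t : ℝ, (ψ t : ℂ) / (z - t)) = ∑' k, J k := by
    have h1 : (fun t : ℝ => (ψ t : ℂ) / (z - t))
        = fun t : ℝ => ∑' k, (f k t : ℂ) / (z - t) := by
      funext t
      rw [hψf t, Complex.ofReal_tsum]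
      exact tsum_div_const.symm
    rw [h1, integral_tsum hgmeas htsumlin]
    exact tsum_congr htrans
  have hzn : z - ((x n : ℝ) : ℂ) = (y n : ℂ) * Complex.I := by rw [hzdef]; ring
  have hmain : L ≤ ‖J n‖ := by
    rw [hJdef]
    simp only [hzn]
    exact Stmt14Aux.bump_main hφ (hy n)
  have herr : ∀ k, k ≠ n → ‖J k‖ ≤ 144 * (y k / (x k) ^ 2) := by
    intro k hk
    have hd : (0:ℝ) < |x k| / 6 := by linarith [hxpos k]
    have hre : (z - ((x k : ℝ) : ℂ)).re = x n - x k := by simp [hzdef]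
    have hdist : ∀ u : ℝ, |u| ≤ 2 * r k → |x k| / 6 ≤ |(z - ((x k : ℝ) : ℂ)).re - u| := by
      intro u hu
      rw [hre]
      have h2 := hrx k
      have h5 : |x n - x k| - |u| ≤ |x n - x k - u| := by
        have := abs_sub_abs_le_abs_sub (x n - x k) u
        linarith
      rcases Nat.lt_or_ge k n with hkn | hkn
      · have h3 : |x n| ≤ |x k| / 2 := hxhalf' k n hkn
        have h4 : |x k| - |x n| ≤ |x n - x k| := by
          have := abs_sub_abs_le_abs_sub (x k) (x n)
          rw [abs_sub_comm] at this
          linarith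
        linarith
      · have hkn' : n < k := lt_of_le_of_ne hkn (fun h => hk h.symm)
        have h3 : |x k| ≤ |x n| / 2 := hxhalf' n k hkn'
        have h4 : |x n| - |x k| ≤ |x n - x k| :=
          abs_sub_abs_le_abs_sub (x n) (x k)
        linarith
    have hbound := Stmt14Aux.bump_bound hφ (hr k) (hwim k) hd hdist
    calc ‖J k‖ ≤ 4 * (r k) ^ 2 / (|x k| / 6) ^ 2 := hbound
      _ = 144 * (y k / (x k) ^ 2) := by
        rw [hr2 k, div_pow, _root_.sq_abs]
        have : (x k) ^ 2 ≠ 0 := pow_ne_zero 2 (hx0 k)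
        field_simp
        ring
  have hJnormsum : Summable (fun k => ‖J k‖) := by
    apply Summable.of_norm_bounded_eventually (g := fun k => 144 * (y k / (x k) ^ 2))
      (hsum.mul_left 144)
    rw [Filter.eventually_cofinite]
    apply Set.Finite.subset (Set.finite_singleton n)
    intro k hk
    simp only [Set.mem_setOf_eq] at hk
    simp only [Set.mem_singleton_iff]
    by_contra hkn
    apply hk
    rw [Real.norm_eq_abs, _root_.abs_of_nonneg (norm_nonneg _)]
    exact herr k hkn
  have hJsum : Summable J := hJnormsum.of_norm
  have hsplit2 : (∑' k, J k) = J n + ∑' k, ite (k = n) 0 (J k) :=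
    Summable.tsum_eq_add_tsum_ite hJsum n
  have hitesum : Summable (fun k => ‖ite (k = n) 0 (J k)‖) := by
    apply Summable.of_nonneg_of_le (fun k => norm_nonneg _) (fun k => ?_) hJnormsum
    by_cases h : k = n <;> simp [h]
  have hR : ‖∑' k, ite (k = n) 0 (J k)‖ ≤ 144 * S := by
    calc ‖∑' k, ite (k = n) 0 (J k)‖ ≤ ∑' k, ‖ite (k = n) 0 (J k)‖ :=
          norm_tsum_le_tsum_norm hitesum
      _ ≤ ∑' k, 144 * (y k / (x k) ^ 2) := by
          apply Summable.tsum_le_tsum ?_ hitesum (hsum.mul_left 144)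
          intro k
          by_cases h : k = n
          · subst h
            rw [if_pos rfl, norm_zero]
            exact mul_nonneg (by norm_num : (0:ℝ) ≤ 144) (div_nonneg (hy _).le (sq_nonneg _))
          · simp only [if_neg h]
            exact herr k h
      _ = 144 * S := by rw [hSdef]; exact tsum_mul_left
  have hT : L - 144 * S ≤ ‖∑' k, J k‖ := by
    rw [hsplit2]
    set R : ℂ := ∑' k, ite (k = n) 0 (J k) with hRdef
    have h3 : ‖J n‖ ≤ ‖J n + R‖ + ‖R‖ := by
      calc ‖J n‖ = ‖J n + R + -R‖ := by congr 1; ring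
        _ ≤ ‖J n + R‖ + ‖-R‖ := norm_add_le _ _
        _ = ‖J n + R‖ + ‖R‖ := by rw [norm_neg]
    linarith
  have hnormUHG : ‖UHG ψ z‖ = Real.pi⁻¹ * ‖∑' k, J k‖ := by
    show ‖((Real.pi : ℂ) * Complex.I)⁻¹ • ∫ t : ℝ, ((ψ t : ℂ) / (z - (t : ℂ)))‖ = _
    rw [hsplit, norm_smul]
    congr 1
    rw [norm_inv, norm_mul, Complex.norm_I, Complex.norm_real, Real.norm_eq_abs,
      abs_of_pos Real.pi_pos, mul_one]
  rw [le_div_iff₀ hLpos, hnormUHG]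
  have hπ : (0:ℝ) < Real.pi := Real.pi_pos
  have h4 : Real.pi⁻¹ * (L - 144 * S) ≤ Real.pi⁻¹ * ‖∑' k, J k‖ :=
    mul_le_mul_of_nonneg_left hT (by positivity)
  have h5 : (1 / Real.pi - ε) * L ≤ Real.pi⁻¹ * (L - 144 * S) := by
    have h7 := mul_le_mul_of_nonneg_left hLS (le_of_lt (inv_pos.mpr hπ))
    have h8 : Real.pi⁻¹ * (Real.pi * ε * L) = ε * L := by
      field_simp
    rw [one_div]
    nlinarith
  linarith
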